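/- Let (Xₙ) be a Markov chain with transition operator P, φ : ℕ → (0,1] nonincreasing with φ(0)=1, and f : E → [1, d·inf f] a bounded continuous function with sup f ≤ d · inf f. Then for all n, k, x: E_{k,x}[exp(Σ_{i=k}^{n+k-1} φ(i) · log(f(X_{i-k}) / Pf(X_{i-k})))] ≤ d. -/

import Mathlib

open MeasureTheory ProbabilityTheory

lemma aux_rpow_le {t p : ℝ} (ht : 0 < t) (hp0 : 0 ≤ p) (hp1 : p ≤ 1) :
    t ^ p ≤ 1 + p * (t - 1) := by
  have := rpow_one_add_le_one_add_mul_self (s := t - 1) (by linarith) hp0 hp1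
  simpa using this

lemma aux_integrable {Ω : Type*} {m0 : MeasurableSpace Ω} {μ : Measure Ω} [IsFiniteMeasure μ]
    {h : Ω → ℝ} (hm : AEStronglyMeasurable h μ) {C : ℝ} (hb : ∀ ω, |h ω| ≤ C) :
    Integrable h μ :=
  (integrable_const C).mono' hm (Filter.Eventually.of_forall fun ω => by
    simpa [Real.norm_eq_abs] using hb ω)

lemma aux_rpow_le_d {r d a : ℝ} (hr : 0 < r) (hrd : r ≤ d) (hd : 1 ≤ d)
    (ha0 : 0 ≤ a) (ha1 : a ≤ 1) : r ^ a ≤ d := by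
  rcases le_total r 1 with h | h
  · exact (Real.rpow_le_one hr.le h ha0).trans hd
  · calc r ^ a ≤ r ^ (1:ℝ) := Real.rpow_le_rpow_of_exponent_le h ha1
    _ = r := Real.rpow_one r
    _ ≤ d := hrd

lemma aux_measurable_rpow {Ω : Type*} {m : MeasurableSpace Ω} {r : Ω → ℝ}
    (hr : Measurable[m] r) (hpos : ∀ ω, 0 < r ω) (c : ℝ) :
    Measurable[m] (fun ω => r ω ^ c) := by
  have : (fun ω => r ω ^ c) = fun ω => Real.exp (Real.log (r ω) * c) :=
    funext fun ω => Real.rpow_def_of_pos (hpos ω) c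
  rw [this]
  exact Real.measurable_exp.comp ((Real.measurable_log.comp hr).mul_const c)

lemma aux_integral_mul {Ω : Type*} {m m0 : MeasurableSpace Ω} (hm : m ≤ m0)
    {μ : Measure Ω} [IsProbabilityMeasure μ]
    {h G q : Ω → ℝ} (hh : StronglyMeasurable[m] h)
    (hhG : Integrable (h * G) μ) (hG : Integrable G μ)
    (hCE : μ[G | m] =ᵐ[μ] q) :
    ∫ ω, h ω * G ω ∂μ = ∫ ω, h ω * q ω ∂μ := by
  have h1 : ∫ ω, (h * G) ω ∂μ = ∫ ω, (μ[(h * G) | m]) ω ∂μ :=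
    (integral_condExp hm).symm
  have h2 : μ[(h * G) | m] =ᵐ[μ] fun ω => h ω * q ω := by
    filter_upwards [condExp_mul_of_stronglyMeasurable_left hh hhG hG, hCE] with ω h2 h3
    rw [h2]; simp [h3]
  calc ∫ ω, h ω * G ω ∂μ = ∫ ω, (μ[(h * G) | m]) ω ∂μ := h1
    _ = ∫ ω, h ω * q ω ∂μ := integral_congr_ae h2

lemma aux_main {Ω : Type*} {m0 : MeasurableSpace Ω} (μ : Measure Ω) [IsProbabilityMeasure μ]
    (ℱ : Filtration ℕ m0) (g p : ℕ → Ω → ℝ) (d : ℝ) (hd : 1 ≤ d)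
    (hgm : ∀ j, Measurable[ℱ j] (g j)) (hpm : ∀ j, Measurable[ℱ j] (p j))
    (hg1 : ∀ j ω, 1 ≤ g j ω) (hgd : ∀ j ω, g j ω ≤ d)
    (hp1 : ∀ j ω, 1 ≤ p j ω) (hpd : ∀ j ω, p j ω ≤ d)
    (hCE : ∀ j, μ[g (j+1) | ℱ j] =ᵐ[μ] p j)
    (a : ℕ → ℝ) (ha0 : ∀ j, 0 ≤ a j) (ha1 : ∀ j, a j ≤ 1) (hmono : ∀ j, a (j+1) ≤ a j)
    (n : ℕ) :
    ∫ ω, ∏ j ∈ Finset.range n, (g j ω / p j ω) ^ (a j) ∂μ ≤ d := by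
  have hgpos : ∀ j ω, (0:ℝ) < g j ω := fun j ω => lt_of_lt_of_le one_pos (hg1 j ω)
  have hppos : ∀ j ω, (0:ℝ) < p j ω := fun j ω => lt_of_lt_of_le one_pos (hp1 j ω)
  have hrpos : ∀ j ω, (0:ℝ) < g j ω / p j ω := fun j ω => div_pos (hgpos j ω) (hppos j ω)
  have hrd : ∀ j ω, g j ω / p j ω ≤ d := fun j ω => by
    rw [div_le_iff₀ (hppos j ω)]
    calc g j ω ≤ d := hgd j ω
      _ = d * 1 := (mul_one d).symm
      _ ≤ d * p j ω :=
        mul_le_mul_of_nonneg_left (hp1 j ω) (le_trans zero_le_one hd)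
  have hfac_le : ∀ j ω, (g j ω / p j ω) ^ (a j) ≤ d := fun j ω =>
    aux_rpow_le_d (hrpos j ω) (hrd j ω) hd (ha0 j) (ha1 j)
  have hfac_nonneg : ∀ j ω, (0:ℝ) ≤ (g j ω / p j ω) ^ (a j) := fun j ω =>
    (Real.rpow_pos_of_pos (hrpos j ω) _).le
  -- the supermartingale-like sequence
  set Q : ℕ → Ω → ℝ := fun m ω =>
    (∏ j ∈ Finset.range m, (g j ω / p j ω) ^ (a j)) * (g m ω) ^ (a m) with hQ
  have hprodmeas : ∀ m, Measurable[ℱ m]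
      (fun ω => ∏ j ∈ Finset.range m, (g j ω / p j ω) ^ (a j)) := by
    intro m
    apply Finset.measurable_prod
    intro j hj
    have hjm : j ≤ m := (Finset.mem_range.mp hj).le
    exact aux_measurable_rpow (((hgm j).mono (ℱ.mono hjm) le_rfl).div
      ((hpm j).mono (ℱ.mono hjm) le_rfl)) (hrpos j) _
  have hQmeas : ∀ m, Measurable[ℱ m] (Q m) := fun m =>
    (hprodmeas m).mul (aux_measurable_rpow (hgm m) (hgpos m) _)
  have hprod_nonneg : ∀ m ω, (0:ℝ) ≤ ∏ j ∈ Finset.range m, (g j ω / p j ω) ^ (a j) :=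
    fun m ω => Finset.prod_nonneg fun j _ => hfac_nonneg j ω
  have hprod_le : ∀ m ω, (∏ j ∈ Finset.range m, (g j ω / p j ω) ^ (a j)) ≤ d ^ m := by
    intro m ω
    calc (∏ j ∈ Finset.range m, (g j ω / p j ω) ^ (a j))
        ≤ ∏ _j ∈ Finset.range m, d :=
          Finset.prod_le_prod (fun j _ => hfac_nonneg j ω) (fun j _ => hfac_le j ω)
      _ = d ^ m := by simp
  have hQnonneg : ∀ m ω, (0:ℝ) ≤ Q m ω := fun m ω =>
    mul_nonneg (hprod_nonneg m ω) (Real.rpow_pos_of_pos (hgpos m ω) _).le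
  have hQbound : ∀ m ω, Q m ω ≤ d ^ (m + 1) := by
    intro m ω
    have h2 : (g m ω) ^ (a m) ≤ d :=
      aux_rpow_le_d (hgpos m ω) (hgd m ω) hd (ha0 m) (ha1 m)
    calc Q m ω ≤ d ^ m * d := by
          apply mul_le_mul (hprod_le m ω) h2 (Real.rpow_pos_of_pos (hgpos m ω) _).le
          positivity
      _ = d ^ (m + 1) := (pow_succ d m).symm
  have hQint : ∀ m, Integrable (Q m) μ := fun m =>
    aux_integrable (((hQmeas m).mono (ℱ.le m) le_rfl).aestronglyMeasurable)
      (C := d ^ (m + 1)) (fun ω => by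
        rw [abs_of_nonneg (hQnonneg m ω)]; exact hQbound m ω)
  -- one step descent
  have hstep : ∀ m, ∫ ω, Q (m+1) ω ∂μ ≤ ∫ ω, Q m ω ∂μ := by
    intro m
    set h : Ω → ℝ := fun ω => Q m ω / p m ω with hh
    have hhmeas : Measurable[ℱ m] h := (hQmeas m).div (hpm m)
    have hhnonneg : ∀ ω, 0 ≤ h ω := fun ω =>
      div_nonneg (hQnonneg m ω) (hppos m ω).le
    have hhle : ∀ ω, h ω ≤ d ^ (m+1) := fun ω =>
      (div_le_self (hQnonneg m ω) (hp1 m ω)).trans (hQbound m ω)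
    have hhG_int : Integrable (h * g (m+1)) μ := by
      apply aux_integrable (C := d ^ (m + 1) * d)
      · exact (((hhmeas.mono (ℱ.le m) le_rfl).mul
          ((hgm (m+1)).mono (ℱ.le (m+1)) le_rfl))).aestronglyMeasurable
      · intro ω
        rw [Pi.mul_apply, abs_of_nonneg (mul_nonneg (hhnonneg ω) (hgpos (m+1) ω).le)]
        exact mul_le_mul (hhle ω) (hgd (m+1) ω) (hgpos (m+1) ω).le (by positivity)
    have hg_int : Integrable (g (m+1)) μ :=
      aux_integrable ((hgm (m+1)).mono (ℱ.le (m+1)) le_rfl).aestronglyMeasurable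
        (C := d) (fun ω => by rw [abs_of_nonneg (hgpos (m+1) ω).le]; exact hgd (m+1) ω)
    have hhG_int' : Integrable (fun ω => h ω * g (m+1) ω) μ := hhG_int
    have hkey : ∫ ω, h ω * g (m+1) ω ∂μ = ∫ ω, Q m ω ∂μ := by
      rw [aux_integral_mul (ℱ.le m) hhmeas.stronglyMeasurable hhG_int hg_int (hCE m)]
      apply integral_congr_ae
      filter_upwards with ω
      have : p m ω ≠ 0 := (hppos m ω).ne'
      rw [hh]
      field_simp
    -- pointwise bound
    have hpoint : ∀ ω, Q (m+1) ω ≤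
        (1 - a m) * Q m ω + a m * (h ω * g (m+1) ω) := by
      intro ω
      have hsucc : Q (m+1) ω = Q m ω * ((g (m+1) ω) ^ (a (m+1)) / (p m ω) ^ (a m)) := by
        rw [hQ]
        simp only [Finset.prod_range_succ]
        rw [Real.div_rpow (hgpos m ω).le (hppos m ω).le]
        ring
      have hpma : (0:ℝ) < (p m ω) ^ (a m) := Real.rpow_pos_of_pos (hppos m ω) _
      have h1 : (g (m+1) ω) ^ (a (m+1)) ≤ (g (m+1) ω) ^ (a m) :=
        Real.rpow_le_rpow_of_exponent_le (hg1 (m+1) ω) (hmono m)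
      have h2 : (g (m+1) ω) ^ (a m) / (p m ω) ^ (a m)
          ≤ 1 + a m * (g (m+1) ω / p m ω - 1) := by
        rw [← Real.div_rpow (hgpos (m+1) ω).le (hppos m ω).le]
        exact aux_rpow_le (div_pos (hgpos (m+1) ω) (hppos m ω)) (ha0 m) (ha1 m)
      have h3 : (g (m+1) ω) ^ (a (m+1)) / (p m ω) ^ (a m)
          ≤ 1 + a m * (g (m+1) ω / p m ω - 1) :=
        le_trans (by gcongr) h2
      calc Q (m+1) ω = Q m ω * ((g (m+1) ω) ^ (a (m+1)) / (p m ω) ^ (a m)) := hsucc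
        _ ≤ Q m ω * (1 + a m * (g (m+1) ω / p m ω - 1)) :=
            mul_le_mul_of_nonneg_left h3 (hQnonneg m ω)
        _ = (1 - a m) * Q m ω + a m * (h ω * g (m+1) ω) := by rw [hh]; ring
    have hint2 : Integrable
        (fun ω => (1 - a m) * Q m ω + a m * (h ω * g (m+1) ω)) μ :=
      ((hQint m).const_mul (1 - a m)).add (hhG_int'.const_mul (a m))
    calc ∫ ω, Q (m+1) ω ∂μ
        ≤ ∫ ω, ((1 - a m) * Q m ω + a m * (h ω * g (m+1) ω)) ∂μ :=
          integral_mono (hQint (m+1)) hint2 hpoint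
      _ = (1 - a m) * ∫ ω, Q m ω ∂μ + a m * ∫ ω, h ω * g (m+1) ω ∂μ := by
          rw [integral_add ((hQint m).const_mul (1 - a m)) (hhG_int'.const_mul (a m)),
            integral_const_mul, integral_const_mul]
      _ = (1 - a m) * ∫ ω, Q m ω ∂μ + a m * ∫ ω, Q m ω ∂μ := by rw [hkey]
      _ = ∫ ω, Q m ω ∂μ := by ring
  have hchain : ∀ m, ∫ ω, Q m ω ∂μ ≤ ∫ ω, Q 0 ω ∂μ := by
    intro m
    induction m with
    | zero => exact le_rfl
    | succ m ih => exact (hstep m).trans ih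
  have hQ0 : ∫ ω, Q 0 ω ∂μ ≤ d := by
    calc ∫ ω, Q 0 ω ∂μ ≤ ∫ _ω, d ∂μ := by
          apply integral_mono (hQint 0) (integrable_const d)
          intro ω
          have : Q 0 ω = (g 0 ω) ^ (a 0) := by rw [hQ]; simp
          rw [this]
          exact aux_rpow_le_d (hgpos 0 ω) (hgd 0 ω) hd (ha0 0) (ha1 0)
      _ = d := by simp
  cases n with
  | zero => simpa using hd
  | succ m =>
    have hpt : ∀ ω, (∏ j ∈ Finset.range (m+1), (g j ω / p j ω) ^ (a j)) ≤ Q m ω := by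
      intro ω
      have hpma : (1:ℝ) ≤ (p m ω) ^ (a m) := by
        have := Real.rpow_le_rpow_of_exponent_le (hp1 m ω) (ha0 m)
        rwa [Real.rpow_zero] at this
      have heq : (∏ j ∈ Finset.range (m+1), (g j ω / p j ω) ^ (a j))
          = Q m ω / (p m ω) ^ (a m) := by
        rw [hQ, Finset.prod_range_succ, Real.div_rpow (hgpos m ω).le (hppos m ω).le]
        ring
      rw [heq]
      exact div_le_self (hQnonneg m ω) hpma
    have hint_prod : Integrable
        (fun ω => ∏ j ∈ Finset.range (m+1), (g j ω / p j ω) ^ (a j)) μ :=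
      aux_integrable (((hprodmeas (m+1)).mono (ℱ.le (m+1)) le_rfl).aestronglyMeasurable)
        (C := d ^ (m+1)) (fun ω => by
          rw [abs_of_nonneg (hprod_nonneg (m+1) ω)]; exact hprod_le (m+1) ω)
    calc ∫ ω, ∏ j ∈ Finset.range (m+1), (g j ω / p j ω) ^ (a j) ∂μ
        ≤ ∫ ω, Q m ω ∂μ := integral_mono hint_prod (hQint m) hpt
      _ ≤ ∫ ω, Q 0 ω ∂μ := hchain m
      _ ≤ d := hQ0

/-- Key exponential estimate for discounted empirical measures: for a Markov chain
`X` started at `x` with Markov kernel `P`, `φ : ℕ → (0,1]` nonincreasing with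
`φ(0) = 1`, and `f` continuous bounded with `1 ≤ f` and `sup f ≤ d · inf f`,
`E_{k,x}[exp(Σ_{i=k}^{n+k-1} φ(i) log(f(X_{i-k})/Pf(X_{i-k})))] ≤ d`. -/
theorem discounted_exponential_estimate
    {Ω E : Type*} {m0 : MeasurableSpace Ω}
    [TopologicalSpace E] [MeasurableSpace E] [BorelSpace E]
    (μ : Measure Ω) [IsProbabilityMeasure μ]
    (ℱ : Filtration ℕ m0)
    (P : Kernel E E) [IsMarkovKernel P]
    (X : ℕ → Ω → E) (hX : ∀ i, Measurable[ℱ i] (X i))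
    (x : E) (hstart : ∀ᵐ ω ∂μ, X 0 ω = x)
    (f : E → ℝ) (hfc : Continuous f) (hf1 : ∀ y, 1 ≤ f y)
    (d : ℝ) (hfd : ∀ y z, f y ≤ d * f z)
    (hMarkovf : ∀ i, μ[(fun ω => f (X (i + 1) ω)) | ℱ i]
        =ᵐ[μ] fun ω => ∫ y, f y ∂(P (X i ω)))
    (φ : ℕ → ℝ) (hφ0 : φ 0 = 1)
    (hφpos : ∀ i, 0 < φ i) (hφle : ∀ i, φ i ≤ 1)
    (hφmono : ∀ i j, i ≤ j → φ j ≤ φ i)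
    (k n : ℕ) :
    ∫ ω, Real.exp (∑ i ∈ Finset.Ico k (n + k),
        φ i * Real.log (f (X (i - k) ω) / ∫ y, f y ∂(P (X (i - k) ω)))) ∂μ
      ≤ d := by
  have hfpos : ∀ y, (0:ℝ) < f y := fun y => lt_of_lt_of_le one_pos (hf1 y)
  have hd1 : 1 ≤ d := by nlinarith [hfd x x, hfpos x]
  have hdpos : (0:ℝ) < d := lt_of_lt_of_le one_pos hd1
  -- the normalizing constant
  set c := sInf (Set.range f) with hcdef
  have hne : (Set.range f).Nonempty := ⟨f x, Set.mem_range_self x⟩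
  have hbdd : BddBelow (Set.range f) := ⟨1, by rintro _ ⟨y, rfl⟩; exact hf1 y⟩
  have hc1 : 1 ≤ c := le_csInf hne (by rintro _ ⟨y, rfl⟩; exact hf1 y)
  have hcpos : (0:ℝ) < c := lt_of_lt_of_le one_pos hc1
  have hcle : ∀ y, c ≤ f y := fun y => csInf_le hbdd ⟨y, rfl⟩
  have hfdc : ∀ y, f y ≤ d * c := by
    intro y
    have h1 : f y / d ≤ c := le_csInf hne (by
      rintro _ ⟨z, rfl⟩
      rw [div_le_iff₀ hdpos]
      calc f y ≤ d * f z := hfd y z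
        _ = f z * d := mul_comm _ _)
    calc f y = f y / d * d := by field_simp
      _ ≤ c * d := mul_le_mul_of_nonneg_right h1 hdpos.le
      _ = d * c := mul_comm _ _
  have hfmeas : Measurable f := hfc.measurable
  have hfint : ∀ z : E, Integrable f (P z) := fun z =>
    aux_integrable hfmeas.aestronglyMeasurable (C := d * c)
      (fun y => by rw [abs_of_nonneg (hfpos y).le]; exact hfdc y)
  have hIlb : ∀ z : E, c ≤ ∫ y, f y ∂(P z) := by
    intro z
    calc c = ∫ _y, c ∂(P z) := by simp
      _ ≤ ∫ y, f y ∂(P z) := integral_mono (integrable_const c) (hfint z) hcle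
  have hIub : ∀ z : E, (∫ y, f y ∂(P z)) ≤ d * c := by
    intro z
    calc (∫ y, f y ∂(P z)) ≤ ∫ _y, d * c ∂(P z) :=
        integral_mono (hfint z) (integrable_const _) hfdc
      _ = d * c := by simp
  have hIpos : ∀ z : E, (0:ℝ) < ∫ y, f y ∂(P z) := fun z =>
    lt_of_lt_of_le hcpos (hIlb z)
  have hImeas : Measurable fun z : E => ∫ y, f y ∂(P z) := by
    have h : StronglyMeasurable (Function.uncurry fun (_ : E) (y : E) => f y) :=
      (hfmeas.comp measurable_snd).stronglyMeasurable
    exact (h.integral_kernel_prod_right (κ := P)).measurable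
  -- normalized processes
  set g : ℕ → Ω → ℝ := fun j ω => f (X j ω) / c with hgdef
  set p : ℕ → Ω → ℝ := fun j ω => (∫ y, f y ∂(P (X j ω))) / c with hpdef
  have hgm : ∀ j, Measurable[ℱ j] (g j) := fun j =>
    (hfmeas.comp (hX j)).div_const c
  have hpm : ∀ j, Measurable[ℱ j] (p j) := fun j =>
    (hImeas.comp (hX j)).div_const c
  have hg1 : ∀ j ω, 1 ≤ g j ω := fun j ω => (one_le_div hcpos).mpr (hcle _)
  have hgd : ∀ j ω, g j ω ≤ d := fun j ω => (div_le_iff₀ hcpos).mpr (hfdc _)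
  have hp1 : ∀ j ω, 1 ≤ p j ω := fun j ω => (one_le_div hcpos).mpr (hIlb _)
  have hpd : ∀ j ω, p j ω ≤ d := fun j ω => (div_le_iff₀ hcpos).mpr (hIub _)
  have hCE : ∀ j, μ[g (j+1) | ℱ j] =ᵐ[μ] p j := by
    intro j
    have h1 : g (j+1) = (c⁻¹ • fun ω => f (X (j+1) ω)) := by
      funext ω
      simp [hgdef, Pi.smul_apply, smul_eq_mul, div_eq_inv_mul]
    rw [h1]
    refine (condExp_smul c⁻¹ _ _).trans ?_
    filter_upwards [hMarkovf j] with ω hω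
    simp only [Pi.smul_apply, hω, smul_eq_mul, hpdef]
    rw [div_eq_inv_mul]
  have Hmain := aux_main μ ℱ g p d hd1 hgm hpm hg1 hgd hp1 hpd hCE
    (fun j => φ (k + j)) (fun j => (hφpos _).le) (fun j => hφle _)
    (fun j => hφmono (k + j) (k + (j+1)) (by omega)) n
  -- rewrite the integrand
  have hpt : ∀ ω, Real.exp (∑ i ∈ Finset.Ico k (n + k),
      φ i * Real.log (f (X (i - k) ω) / ∫ y, f y ∂(P (X (i - k) ω))))
      = ∏ j ∈ Finset.range n, (g j ω / p j ω) ^ ((fun j => φ (k + j)) j) := by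
    intro ω
    rw [Finset.sum_Ico_eq_sum_range]
    simp only [Nat.add_sub_cancel, Nat.add_sub_cancel_left]
    rw [Real.exp_sum]
    apply Finset.prod_congr rfl
    intro j _
    have hratio : g j ω / p j ω = f (X j ω) / ∫ y, f y ∂(P (X j ω)) := by
      rw [hgdef, hpdef]
      have h2 : (∫ y, f y ∂(P (X j ω))) ≠ 0 := (hIpos _).ne'
      field_simp
    rw [hratio, Real.rpow_def_of_pos (div_pos (hfpos _) (hIpos _)), mul_comm]
  calc ∫ ω, Real.exp (∑ i ∈ Finset.Ico k (n + k),
        φ i * Real.log (f (X (i - k) ω) / ∫ y, f y ∂(P (X (i - k) ω)))) ∂μ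
      = ∫ ω, ∏ j ∈ Finset.range n, (g j ω / p j ω) ^ ((fun j => φ (k + j)) j) ∂μ :=
        integral_congr_ae (Filter.Eventually.of_forall hpt)
    _ ≤ d := Hmain
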